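/- Let n be even, j = n/2, 0 < i < j, gcd(n,i,j) = 1, and (n,i,j) ≠ (6,1,3) with n ≥ 6. Then in C_n(i,j), for every vertex a, N(a) ∩ N(a+i+j) = {a+i, a+j}. -/

import Mathlib

/-- The two-generator circulant graph `C_n(i,j)` on `ℤ/nℤ`:
distinct `a, b` are adjacent iff `a - b ∈ {i, -i, j, -j}`. -/
def circulant (n : ℕ) (i j : ZMod n) : SimpleGraph (ZMod n) where
  Adj a b := a ≠ b ∧ (a - b = i ∨ a - b = -i ∨ a - b = j ∨ a - b = -j)
  symm := by
    constructor
    rintro a b ⟨hab, h⟩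
    refine ⟨fun h' => hab h'.symm, ?_⟩
    have hba : b - a = -(a - b) := by ring
    rcases h with h | h | h | h <;> rw [hba, h] <;> simp
  loopless := by constructor; rintro a ⟨h, -⟩; exact h rfl

theorem stmt_13 (n i : ℕ) (hn : 6 ≤ n) (hne : Even n) (hi : 0 < i)
    (hij : i < n / 2) (hgcd : Nat.gcd n (Nat.gcd i (n / 2)) = 1)
    (hspecial : (n, i, n / 2) ≠ (6, 1, 3)) :
    ∀ a : ZMod n,
      (circulant n (i : ZMod n) ((n / 2 : ℕ) : ZMod n)).neighborSet a ∩
        (circulant n (i : ZMod n) ((n / 2 : ℕ) : ZMod n)).neighborSet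
          (a + (i : ZMod n) + ((n / 2 : ℕ) : ZMod n)) =
      {a + (i : ZMod n), a + ((n / 2 : ℕ) : ZMod n)} := by
  have hn0 : 0 < n := by omega
  haveI : NeZero n := ⟨by omega⟩
  have hne' : n % 2 = 0 := Nat.even_iff.mp hne
  set m := n / 2 with hmdef
  have hmm : m + m = n := by omega
  have castzero : ∀ k : ℕ, 0 < k → k < n → (k : ZMod n) ≠ 0 := by
    intro k hk1 hk2 h
    rw [ZMod.natCast_eq_zero_iff] at h
    exact absurd (Nat.le_of_dvd hk1 h) (by omega)
  have hjj : ((m : ℕ) : ZMod n) + m = 0 := by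
    rw [← Nat.cast_add, hmm, ZMod.natCast_self]
  have hiZ : ((i : ℕ) : ZMod n) ≠ 0 := castzero i hi (by omega)
  have hjZ : ((m : ℕ) : ZMod n) ≠ 0 := castzero m (by omega) (by omega)
  have h2iZ : ((i : ℕ) : ZMod n) + i ≠ 0 := by
    rw [← Nat.cast_add]; exact castzero _ (by omega) (by omega)
  have hijZ : ((i : ℕ) : ZMod n) + m ≠ 0 := by
    rw [← Nat.cast_add]; exact castzero _ (by omega) (by omega)
  have h3 : ¬ (n ∣ (i + i + i + m)) := by
    intro hd
    obtain ⟨c, hc⟩ := hd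
    have hc1 : c = 1 := by
      rcases Nat.lt_or_ge c 2 with h | h
      · interval_cases c <;> omega
      · exfalso
        have : n * 2 ≤ n * c := Nat.mul_le_mul_left n h
        omega
    subst hc1
    rw [mul_one] at hc
    -- so 3i + m = n = 2m, hence m = 3i
    have hm3i : m = 3 * i := by omega
    have hgi : Nat.gcd i m = i := Nat.gcd_eq_left ⟨3, by omega⟩
    have hin : i ∣ n := ⟨6, by omega⟩
    have hni : Nat.gcd n i = i := Nat.gcd_eq_right hin
    rw [hgi, hni] at hgcd
    have h6 : n = 6 := by omega
    have hi1 : i = 1 := hgcd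
    have hm3 : m = 3 := by omega
    exact hspecial (by rw [h6, hi1, hm3])
  have h3ijZ : ((i : ℕ) : ZMod n) + i + i + m ≠ 0 := by
    rw [← Nat.cast_add, ← Nat.cast_add, ← Nat.cast_add]
    intro h
    rw [ZMod.natCast_eq_zero_iff] at h
    exact h3 h
  intro a
  ext x
  simp only [Set.mem_inter_iff, SimpleGraph.mem_neighborSet, circulant,
    Set.mem_insert_iff, Set.mem_singleton_iff]
  constructor
  · rintro ⟨⟨hxa, h1⟩, ⟨hxb, h2⟩⟩
    rcases h1 with h1 | h1 | h1 | h1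
    · -- a - x = i : contradictions
      exfalso
      rcases h2 with h2 | h2 | h2 | h2
      · exact hijZ (by linear_combination h2 - h1)
      · exact h3ijZ (by linear_combination h2 - h1)
      · exact h2iZ (by linear_combination h2 - h1)
      · exact h2iZ (by linear_combination h2 - h1 - hjj)
    · left; linear_combination -h1
    · right; linear_combination -h1 - hjj
    · right; linear_combination -h1
  · rintro (rfl | rfl)
    · refine ⟨⟨fun h => hiZ (by linear_combination -h), Or.inr (Or.inl (by ring))⟩,
        ⟨fun h => hjZ (by linear_combination h), Or.inr (Or.inr (Or.inl (by ring)))⟩⟩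
    · refine ⟨⟨fun h => hjZ (by linear_combination -h), Or.inr (Or.inr (Or.inr (by ring)))⟩,
        ⟨fun h => hiZ (by linear_combination h), Or.inl (by ring)⟩⟩
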